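/- Under the isomorphism σ: (O_α × g)/(O_α × g)^⊥ ≅ (g_k ⊕ g_0 ⊕ g_{−k}) × g, the image of (O_α × g) ∩ g[u] (with g[u] embedded diagonally via p ↦ (p(u), p(0))) equals Δ_α, the set of pairs (a, b) with a = a_0 + a_{−k} ∈ g_0 + g_{−k}, b = b_0 + b_{−1} + ... + b_{−k} ∈ g_0 + g_{−1} + ... + g_{−k}, and a_0 = b_0. -/

import Mathlib

attribute [-instance] HahnSeries.powerSeriesAlgebra

open TensorProduct

/-- `u^{-m}·𝕆` where `𝕆 = ℂ[[u⁻¹]]`: Laurent series (in `t = u⁻¹`) whose coefficients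
vanish below `m`. -/
noncomputable def coeffGe (m : ℤ) : Submodule ℂ (LaurentSeries ℂ) where
  carrier := {f | ∀ n < m, f.coeff n = 0}
  add_mem' := by
    intro a b ha hb n hn
    simp only [HahnSeries.coeff_add, ha n hn, hb n hn, add_zero]
  zero_mem' := by intro n hn; simp
  smul_mem' := by
    intro c f hf n hn
    simp only [HahnSeries.coeff_smul, hf n hn, smul_zero]

/-- The image of `S ⊗ W` in `ℂ((u⁻¹)) ⊗ g`. -/
noncomputable def tens {g : Type*} [AddCommGroup g] [Module ℂ g]
    (S : Submodule ℂ (LaurentSeries ℂ)) (W : Submodule ℂ g) :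
    Submodule ℂ (LaurentSeries ℂ ⊗[ℂ] g) :=
  LinearMap.range (TensorProduct.map S.subtype W.subtype)

/-- Coefficients of the image of a polynomial under `aeval u`, `u = single (-1) 1`. -/
lemma aeval_uu_coeff (p : Polynomial ℂ) (n : ℤ) :
    ((Polynomial.aeval (HahnSeries.single (-1) 1 : LaurentSeries ℂ)) p).coeff n
      = if 0 ≤ -n then p.coeff (-n).toNat else 0 := by
  induction p using Polynomial.induction_on' with
  | add p q hp hq =>
    simp only [map_add, HahnSeries.coeff_add, hp, hq, Polynomial.coeff_add]
    split <;> simp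
  | monomial m a =>
    simp only [Polynomial.aeval_monomial, HahnSeries.algebraMap_apply,
      Algebra.algebraMap_self, RingHom.id_apply, HahnSeries.C_apply, HahnSeries.single_pow,
      one_pow, HahnSeries.single_mul_single, zero_add, mul_one, HahnSeries.coeff_single,
      Polynomial.coeff_monomial, nsmul_eq_mul, mul_neg_one]
    by_cases h : n = -(m : ℤ)
    · rw [if_pos h, if_pos (by omega), if_pos (by omega)]
    · rw [if_neg h]
      by_cases h0 : 0 ≤ -n
      · rw [if_pos h0, if_neg (by omega)]
      · rw [if_neg h0]

lemma tens_le_comap {g : Type*} [AddCommGroup g] [Module ℂ g]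
    (S : Submodule ℂ (LaurentSeries ℂ)) (W : Submodule ℂ g)
    {N : Type*} [AddCommGroup N] [Module ℂ N]
    (L : (LaurentSeries ℂ ⊗[ℂ] g) →ₗ[ℂ] N) (T : Submodule ℂ N)
    (h : ∀ f ∈ S, ∀ x ∈ W, L (f ⊗ₜ x) ∈ T) :
    tens S W ≤ Submodule.comap L T := by
  rintro z ht
  rw [tens, LinearMap.mem_range] at ht
  obtain ⟨t, rfl⟩ := ht
  induction t with
  | zero =>
    rw [LinearMap.map_zero, Submodule.mem_comap, LinearMap.map_zero]
    exact T.zero_mem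
  | tmul f x =>
    rw [Submodule.mem_comap, TensorProduct.map_tmul]
    exact h f.1 f.2 x.1 x.2
  | add a b ha hb =>
    rw [LinearMap.map_add, Submodule.mem_comap, LinearMap.map_add]
    exact T.add_mem ha hb

lemma mem_tens {g : Type*} [AddCommGroup g] [Module ℂ g]
    {S : Submodule ℂ (LaurentSeries ℂ)} {W : Submodule ℂ g}
    {f : LaurentSeries ℂ} (hf : f ∈ S) {x : g} (hx : x ∈ W) :
    f ⊗ₜ[ℂ] x ∈ tens S W := by
  rw [tens, LinearMap.mem_range]
  exact ⟨⟨f, hf⟩ ⊗ₜ ⟨x, hx⟩, by rw [TensorProduct.map_tmul]; rfl⟩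

/-- Under the map `σ` inducing the isomorphism
`(𝕆_α × g)/(𝕆_α × g)^⊥ ≅ (G k ⊕ G 0 ⊕ G (−k)) × g`, the image of
`(𝕆_α × g) ∩ g[u]` (with `g[u]` embedded via `p ↦ (p(u), p(0))`) equals `Δ_α`, the
set of pairs `(a, b)` with `a ∈ G 0 + G (−k)`, `b ∈ G 0 + G (−1) + … + G (−k)`, and
equal `G 0`-components (`a₀ = b₀`). -/
theorem image_of_polynomials_is_Delta_alpha
    {g : Type*} [LieRing g] [LieAlgebra ℂ g] [FiniteDimensional ℂ g]
    [LieAlgebra.IsSimple ℂ g]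
    (k : ℤ) (hk : 1 ≤ k)
    (G : ℤ → Submodule ℂ g)
    (hGbr : ∀ r s : ℤ, ∀ x ∈ G r, ∀ y ∈ G s, ⁅x, y⁆ ∈ G (r + s))
    (hGout : ∀ r : ℤ, (r < -k ∨ k < r) → G r = ⊥)
    (hGtop : (⨆ r : ℤ, G r) = ⊤)
    (cf : ℤ → ((LaurentSeries ℂ ⊗[ℂ] g) →ₗ[ℂ] g))
    (hcf : ∀ (n : ℤ) (f : LaurentSeries ℂ) (x : g), cf n (f ⊗ₜ x) = f.coeff n • x)
    (π : ℤ → (g →ₗ[ℂ] g))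
    (hπ₁ : ∀ r : ℤ, ∀ x ∈ G r, π r x = x)
    (hπ₂ : ∀ r s : ℤ, r ≠ s → ∀ x ∈ G s, π r x = 0)
    (Oα : Submodule ℂ (LaurentSeries ℂ ⊗[ℂ] g))
    (hOα : Oα = (⨆ r ∈ Set.Icc 1 k, tens (coeffGe 1) (G r)) ⊔
        (⨆ r ∈ Set.Icc (1 - k) 0, tens (coeffGe 0) (G r)) ⊔
        tens (coeffGe (-1)) (G (-k)))
    (σ' : ((LaurentSeries ℂ ⊗[ℂ] g) × g) →ₗ[ℂ] g × g)
    (hσ' : ∀ z : (LaurentSeries ℂ ⊗[ℂ] g) × g,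
      σ' z = (π k (cf 1 z.1) + π 0 (cf 0 z.1) + π (-k) (cf (-1) z.1), z.2))
    -- the embedding `g[u] → g((u⁻¹)) × g`, `p(u) ↦ (p(u), p(0))`
    (em : (Polynomial ℂ ⊗[ℂ] g) →ₗ[ℂ] (LaurentSeries ℂ ⊗[ℂ] g) × g)
    (hem : ∀ (p : Polynomial ℂ) (x : g),
      em (p ⊗ₜ x) =
        ((Polynomial.aeval (HahnSeries.single (-1) 1 : LaurentSeries ℂ) p) ⊗ₜ x,
         Polynomial.eval 0 p • x)) :
    σ' '' ((Oα.prod (⊤ : Submodule ℂ g) : Set _) ∩ Set.range em)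
      = {p : g × g | p.1 ∈ G 0 ⊔ G (-k) ∧
          p.2 ∈ (⨆ r ∈ Set.Icc (-k) (0 : ℤ), G r) ∧ π 0 p.1 = π 0 p.2} := by
  -- π r maps everything into G r
  have hπG : ∀ (r : ℤ) (x : g), π r x ∈ G r := by
    intro r x
    have hx : x ∈ (⨆ s, G s) := hGtop ▸ Submodule.mem_top
    refine Submodule.iSup_induction G (motive := fun y => π r y ∈ G r) hx ?_ (by simp) ?_
    · intro s y hy
      by_cases h : r = s
      · subst h; rw [hπ₁ r y hy]; exact hy
      · rw [hπ₂ r s h y hy]; exact Submodule.zero_mem _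
    · intro a b ha hb; rw [map_add]; exact Submodule.add_mem _ ha hb
  -- coefficient facts about range of em
  have hem2 : ∀ f : Polynomial ℂ ⊗[ℂ] g,
      cf 1 (em f).1 = 0 ∧ (em f).2 = cf 0 (em f).1 := by
    intro f
    induction f with
    | zero => simp
    | tmul p x =>
      rw [hem p x]
      constructor
      · rw [hcf, aeval_uu_coeff]
        norm_num
      · rw [hcf, aeval_uu_coeff]
        norm_num
        rw [Polynomial.coeff_zero_eq_eval_zero]
    | add a b ha hb =>
      rw [map_add]
      constructor
      · simp only [Prod.fst_add, map_add, ha.1, hb.1, add_zero]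
      · simp only [Prod.snd_add, Prod.fst_add, map_add, ha.2, hb.2]
  -- cf 0 maps Oα into ⨆_{r ∈ [-k,0]} G r
  have hcf0 : ∀ z ∈ Oα, cf 0 z ∈ (⨆ r ∈ Set.Icc (-k) (0 : ℤ), G r) := by
    have : Oα ≤ Submodule.comap (cf 0) (⨆ r ∈ Set.Icc (-k) (0 : ℤ), G r) := by
      rw [hOα]
      refine sup_le (sup_le ?_ ?_) ?_
      · refine iSup₂_le fun r hr => tens_le_comap _ _ _ _ fun f hf x hx => ?_
        rw [hcf, hf 0 (by norm_num), zero_smul]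
        exact Submodule.zero_mem _
      · refine iSup₂_le fun r hr => tens_le_comap _ _ _ _ fun f hf x hx => ?_
        rw [hcf]
        refine Submodule.mem_iSup_of_mem r (Submodule.mem_iSup_of_mem ?_ ?_)
        · exact ⟨by have := hr.1; omega, hr.2⟩
        · exact Submodule.smul_mem _ _ hx
      · refine tens_le_comap _ _ _ _ fun f hf x hx => ?_
        rw [hcf]
        refine Submodule.mem_iSup_of_mem (-k) (Submodule.mem_iSup_of_mem ?_ ?_)
        · exact ⟨le_refl _, by omega⟩
        · exact Submodule.smul_mem _ _ hx
    exact fun z hz => this hz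
  ext ⟨a, b⟩
  simp only [Set.mem_image, Set.mem_inter_iff, Set.mem_setOf_eq, SetLike.mem_coe]
  constructor
  · rintro ⟨z, ⟨hzO, hzem⟩, hz⟩
    obtain ⟨f, rfl⟩ := hzem
    rw [Submodule.mem_prod] at hzO
    obtain ⟨h1, h2⟩ := hem2 f
    rw [hσ'] at hz
    cases hz
    refine ⟨?_, ?_, ?_⟩
    · rw [h1, map_zero, zero_add]
      exact Submodule.add_mem_sup (hπG 0 _) (hπG (-k) _)
    · rw [h2]; exact hcf0 _ hzO.1
    · rw [h1, map_zero, zero_add, map_add, hπ₁ 0 _ (hπG 0 _),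
        hπ₂ 0 (-k) (by omega) _ (hπG (-k) _), add_zero, h2]
  · rintro ⟨ha, hb, hab⟩
    obtain ⟨a₀, ha₀, aneg, haneg, rfl⟩ := Submodule.mem_sup.mp ha
    have hπ0a : π 0 (a₀ + aneg) = a₀ := by
      rw [map_add, hπ₁ 0 _ ha₀, hπ₂ 0 (-k) (by omega) _ haneg, add_zero]
    refine ⟨em ((1 : Polynomial ℂ) ⊗ₜ b + Polynomial.X ⊗ₜ aneg), ⟨?_, ⟨_, rfl⟩⟩, ?_⟩
    · rw [Submodule.mem_prod]
      refine ⟨?_, Submodule.mem_top⟩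
      rw [map_add, hem, hem]
      simp only [map_one, Polynomial.aeval_X, Polynomial.eval_one, Polynomial.eval_X,
        Prod.fst_add]
      -- show (1 : LaurentSeries ℂ) ⊗ₜ b + single (-1) 1 ⊗ₜ aneg ∈ Oα
      have h1mem : ∀ m : ℤ, m ≤ 0 → (1 : LaurentSeries ℂ) ∈ coeffGe m := by
        intro m hm n hn
        rw [← HahnSeries.single_zero_one, HahnSeries.coeff_single_of_ne (by omega)]
      have humem : (HahnSeries.single (-1) 1 : LaurentSeries ℂ) ∈ coeffGe (-1) := by
        intro n hn
        rw [HahnSeries.coeff_single_of_ne (by omega)]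
      refine Submodule.add_mem _ ?_ ?_
      · -- 1 ⊗ₜ b with b ∈ ⨆_{r ∈ [-k,0]} G r
        have hle : (⨆ r ∈ Set.Icc (-k) (0 : ℤ), G r) ≤
            Submodule.comap ((TensorProduct.mk ℂ (LaurentSeries ℂ) g) 1) Oα := by
          refine iSup₂_le fun r hr x hx => ?_
          rw [Submodule.mem_comap, TensorProduct.mk_apply, hOα]
          by_cases hr1 : 1 - k ≤ r
          · refine Submodule.mem_sup_left (Submodule.mem_sup_right ?_)
            refine Submodule.mem_iSup_of_mem r (Submodule.mem_iSup_of_mem ⟨hr1, hr.2⟩ ?_)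
            exact mem_tens (h1mem 0 le_rfl) hx
          · have hrk : r = -k := by
              have := hr.1; omega
            subst hrk
            exact Submodule.mem_sup_right (mem_tens (h1mem (-1) (by omega)) hx)
        exact hle hb
      · rw [hOα]
        exact Submodule.mem_sup_right (mem_tens humem haneg)
    · rw [hσ', map_add, hem, hem]
      simp only [map_one, Polynomial.aeval_X, Polynomial.eval_one, Polynomial.eval_X,
        Prod.fst_add, Prod.snd_add, one_smul, zero_smul, map_add, hcf]
      have c1 : (1 : LaurentSeries ℂ).coeff 1 = 0 := by
        rw [← HahnSeries.single_zero_one, HahnSeries.coeff_single_of_ne (by omega)]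
      have c0 : (1 : LaurentSeries ℂ).coeff 0 = 1 := by
        rw [← HahnSeries.single_zero_one, HahnSeries.coeff_single_same]
      have cm1 : (1 : LaurentSeries ℂ).coeff (-1) = 0 := by
        rw [← HahnSeries.single_zero_one, HahnSeries.coeff_single_of_ne (by omega)]
      have u1 : (HahnSeries.single (-1) 1 : LaurentSeries ℂ).coeff 1 = 0 :=
        HahnSeries.coeff_single_of_ne (by omega)
      have u0 : (HahnSeries.single (-1) 1 : LaurentSeries ℂ).coeff 0 = 0 :=
        HahnSeries.coeff_single_of_ne (by omega)
      have um1 : (HahnSeries.single (-1) 1 : LaurentSeries ℂ).coeff (-1) = 1 :=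
        HahnSeries.coeff_single_same _ _
      rw [c1, c0, cm1, u1, u0, um1]
      simp only [zero_smul, one_smul, map_zero, add_zero, zero_add]
      rw [hπ₁ (-k) _ haneg, ← hab, hπ0a]
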